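/- Let 1 ≤ k ≤ 5. Let x, x′ ∈ H_k with ω(x,x′) = 0 and gcd(x,x′) = 1. Let v_1, …, v_4 ∈ H be such that v_j = a_j for 1 ≤ j ≤ k−1, each v_j for k ≤ j ≤ 4 is a primitive vector lying in H_{k+1} ∪ {a_1,a_2,a_3,a_4}, the family (x, v_1, v_2, v_3, v_4) is pairwise ω-orthogonal with gcd(x,v_1,v_2,v_3,v_4) = 1, and the six vectors x, x′, v_1, v_2, v_3, v_4 are ℚ-linearly independent. Then there exists a ℚ-basis B of the orthogonal complement {z ∈ ℚ^{2g} : ω(z,x) = ω(z,x′) = 0} such that: (a) a_1, b_1, …, a_{k−1}, b_{k−1} all belong to B, and every element of B either equals some b_j with 1 ≤ j ≤ k−1 or is a primitive integer vector lying in H_k ∪ {a_1,a_2,a_3,a_4}; and (b) every z ∈ B is ω-orthogonal to at least three of v_1, v_2, v_3, v_4. -/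

import Mathlib

namespace Paper

/-- The standard symplectic form on `R^{2g}` with respect to the basis
`a_1, b_1, …, a_g, b_g` (coordinates `2i, 2i+1` for `a_{i+1}, b_{i+1}`). -/
def symp {R : Type*} [CommRing R] {g : ℕ} (x y : Fin (2 * g) → R) : R :=
  ∑ i : Fin g,
    (x ⟨2 * i.1, by omega⟩ * y ⟨2 * i.1 + 1, by omega⟩ -
      x ⟨2 * i.1 + 1, by omega⟩ * y ⟨2 * i.1, by omega⟩)

theorem symp_add_left {R : Type*} [CommRing R] {g : ℕ} (x y a : Fin (2 * g) → R) :
    symp (x + y) a = symp x a + symp y a := by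
  unfold symp
  rw [← Finset.sum_add_distrib]
  exact Finset.sum_congr rfl fun i _ => by simp only [Pi.add_apply]; ring

theorem symp_smul_left {R : Type*} [CommRing R] {g : ℕ} (c : R) (x a : Fin (2 * g) → R) :
    symp (c • x) a = c * symp x a := by
  unfold symp
  rw [Finset.mul_sum]
  exact Finset.sum_congr rfl fun i _ => by simp only [Pi.smul_apply, smul_eq_mul]; ring

theorem symp_zero_left {R : Type*} [CommRing R] {g : ℕ} (a : Fin (2 * g) → R) :
    symp (0 : Fin (2 * g) → R) a = 0 := by
  unfold symp; simp

/-- The orthogonal complement `A^⊥ = {x | ω(x,a) = 0 for all a ∈ A}`. -/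
def perp {R : Type*} [CommRing R] {g : ℕ} (A : Set (Fin (2 * g) → R)) :
    Submodule R (Fin (2 * g) → R) where
  carrier := {x | ∀ a ∈ A, symp x a = 0}
  add_mem' := by
    intro x y hx hy a ha
    rw [symp_add_left, hx a ha, hy a ha, add_zero]
  zero_mem' := by
    intro a ha
    exact symp_zero_left a
  smul_mem' := by
    intro c x hx a ha
    rw [symp_smul_left, hx a ha, mul_zero]

/-- The submodule of vectors whose first `m` coordinates vanish.
`H_k = coordZero R (2*g) (2*(k-1))`, and `H₂ = coordZero R (2*(g+1)) 2`. -/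
def coordZero (R : Type*) [CommRing R] (n m : ℕ) : Submodule R (Fin n → R) where
  carrier := {v | ∀ j : Fin n, (j : ℕ) < m → v j = 0}
  add_mem' := by
    intro x y hx hy j hj
    have h1 := hx j hj
    have h2 := hy j hj
    simp [Pi.add_apply, h1, h2]
  zero_mem' := by intro j hj; rfl
  smul_mem' := by
    intro c x hx j hj
    have h1 := hx j hj
    simp [Pi.smul_apply, h1]

/-- The standard basis vector `a_{i+1}` (`i` is 0-indexed). -/
def stdA (R : Type*) [CommRing R] (g i : ℕ) : Fin (2 * g) → R :=
  fun j => if (j : ℕ) = 2 * i then 1 else 0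

/-- The standard basis vector `b_{i+1}` (`i` is 0-indexed). -/
def stdB (R : Type*) [CommRing R] (g i : ℕ) : Fin (2 * g) → R :=
  fun j => if (j : ℕ) = 2 * i + 1 then 1 else 0

/-- Regard an integer vector as a rational vector. -/
def qcast {n : ℕ} (v : Fin n → ℤ) : Fin n → ℚ := fun j => (v j : ℚ)

/-- The projection `pr₂` deleting the `a_1`- and `b_1`-coordinates. -/
def pr2 {R : Type*} [CommRing R] {n : ℕ} (v : Fin n → R) : Fin n → R :=
  fun j => if (j : ℕ) < 2 then 0 else v j

/-- `gcd(v_1, …, v_m) = 1`: the vectors are linearly independent and their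
ℤ-span is a direct summand. -/
def IsUnimodular {n m : ℕ} (v : Fin m → Fin n → ℤ) : Prop :=
  LinearIndependent ℤ v ∧
    ∃ C : Submodule ℤ (Fin n → ℤ), IsCompl (Submodule.span ℤ (Set.range v)) C

/-- A primitive vector. -/
def Primitive {n : ℕ} (v : Fin n → ℤ) : Prop := IsUnimodular ![v]

/-- The entries of `w` are pairwise `ω`-orthogonal. -/
def PairwiseOrth {g m : ℕ} (w : Fin m → Fin (2 * g) → ℤ) : Prop :=
  ∀ i j, i ≠ j → symp (w i) (w j) = 0

/-- `Λ³ W`: the span of all wedges of three vectors from `W` inside the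
exterior algebra. -/
def wedge3 {g : ℕ} (W : Submodule ℚ (Fin (2 * g) → ℚ)) :
    Submodule ℚ (ExteriorAlgebra ℚ (Fin (2 * g) → ℚ)) :=
  Submodule.span ℚ {x | ∃ z₁ ∈ W, ∃ z₂ ∈ W, ∃ z₃ ∈ W,
    x = ExteriorAlgebra.ι ℚ z₁ * ExteriorAlgebra.ι ℚ z₂ * ExteriorAlgebra.ι ℚ z₃}

/-- `u ∧ Λ² W`. -/
def uWedge2 {g : ℕ} (u : Fin (2 * g) → ℚ) (W : Submodule ℚ (Fin (2 * g) → ℚ)) :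
    Submodule ℚ (ExteriorAlgebra ℚ (Fin (2 * g) → ℚ)) :=
  Submodule.span ℚ {x | ∃ z₁ ∈ W, ∃ z₂ ∈ W,
    x = ExteriorAlgebra.ι ℚ u * ExteriorAlgebra.ι ℚ z₁ * ExteriorAlgebra.ι ℚ z₂}

/-- `u ∧ u' ∧ W`. -/
def uuWedge1 {g : ℕ} (u u' : Fin (2 * g) → ℚ) (W : Submodule ℚ (Fin (2 * g) → ℚ)) :
    Submodule ℚ (ExteriorAlgebra ℚ (Fin (2 * g) → ℚ)) :=
  Submodule.span ℚ {x | ∃ z ∈ W,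
    x = ExteriorAlgebra.ι ℚ u * ExteriorAlgebra.ι ℚ u' * ExteriorAlgebra.ι ℚ z}

/-- The simplicial differential: on the summand indexed by `w` it sends `z` to
`Σ_j (-1)^j · z` placed in the summand indexed by `∂_j w`. -/
noncomputable def diff (g p : ℕ)
    (ξ : (Fin (p + 1) → Fin (2 * g) → ℤ) →₀ ExteriorAlgebra ℚ (Fin (2 * g) → ℚ)) :
    (Fin p → Fin (2 * g) → ℤ) →₀ ExteriorAlgebra ℚ (Fin (2 * g) → ℚ) :=
  ξ.sum fun w z =>
    ∑ j : Fin (p + 1), ((-1 : ℚ) ^ (j : ℕ)) • Finsupp.single (fun i => w (j.succAbove i)) z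

/-- The gcd of the determinants of all maximal square submatrices of the matrix
whose columns are the `v i`. -/
def vgcd {ι : Type*} [Fintype ι] {m : ℕ} (v : Fin m → ι → ℤ) : ℕ :=
  Finset.univ.gcd fun r : Fin m → ι => (Matrix.det (Matrix.of fun i j => v j (r i))).natAbs

section Helpers

variable {R : Type*} [CommRing R] {g : ℕ}

theorem symp_add_right (x y a : Fin (2 * g) → R) :
    symp a (x + y) = symp a x + symp a y := by
  unfold symp
  rw [← Finset.sum_add_distrib]
  exact Finset.sum_congr rfl fun i _ => by simp only [Pi.add_apply]; ring

theorem symp_smul_right (c : R) (x a : Fin (2 * g) → R) :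
    symp a (c • x) = c * symp a x := by
  unfold symp
  rw [Finset.mul_sum]
  exact Finset.sum_congr rfl fun i _ => by simp only [Pi.smul_apply, smul_eq_mul]; ring

theorem symp_zero_right (a : Fin (2 * g) → R) :
    symp a (0 : Fin (2 * g) → R) = 0 := by
  unfold symp; simp

theorem symp_self (x : Fin (2 * g) → R) : symp x x = 0 := by
  unfold symp
  rw [Finset.sum_eq_zero]
  intro i _
  ring

theorem symp_antisymm (x y : Fin (2 * g) → R) : symp x y = - symp y x := by
  unfold symp
  rw [← Finset.sum_neg_distrib]
  exact Finset.sum_congr rfl fun i _ => by ring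

theorem symp_qcast (x y : Fin (2 * g) → ℤ) :
    symp (qcast x) (qcast y) = ((symp x y : ℤ) : ℚ) := by
  unfold symp qcast
  push_cast
  rfl

theorem stdA_eq_zero (i : ℕ) (hi : g ≤ i) : stdA R g i = 0 := by
  funext j
  have : (j : ℕ) < 2 * g := j.2
  simp only [stdA]
  rw [if_neg (by omega)]
  rfl

theorem symp_stdA_right (i : ℕ) (hi : i < g) (z : Fin (2 * g) → R) :
    symp z (stdA R g i) = - z ⟨2 * i + 1, by omega⟩ := by
  unfold symp stdA
  rw [Finset.sum_eq_single (⟨i, hi⟩ : Fin g)]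
  · simp
  · intro b _ hb
    have hbv : (b : ℕ) ≠ i := fun h => hb (by ext; exact h)
    rw [if_neg (by simpa using by omega), if_neg (by simpa using by omega)]
    ring
  · simp

theorem symp_stdB_right (i : ℕ) (hi : i < g) (z : Fin (2 * g) → R) :
    symp z (stdB R g i) = z ⟨2 * i, by omega⟩ := by
  unfold symp stdB
  rw [Finset.sum_eq_single (⟨i, hi⟩ : Fin g)]
  · simp
  · intro b _ hb
    have hbv : (b : ℕ) ≠ i := fun h => hb (by ext; exact h)
    rw [if_neg (by simpa using by omega), if_neg (by simpa using by omega)]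
    ring
  · simp

end Helpers
section Helpers2

variable {R : Type*} [CommRing R] {g : ℕ}

theorem stdA_mem_coordZero (i m : ℕ) (him : m ≤ 2 * i) :
    stdA R g i ∈ coordZero R (2 * g) m := by
  intro j hj
  simp only [stdA]
  rw [if_neg (by omega)]

theorem stdB_mem_coordZero (i m : ℕ) (him : m ≤ 2 * i + 1) :
    stdB R g i ∈ coordZero R (2 * g) m := by
  intro j hj
  simp only [stdB]
  rw [if_neg (by omega)]

theorem qcast_stdA (i : ℕ) : qcast (stdA ℤ g i) = stdA ℚ g i := by
  funext j
  simp only [qcast, stdA]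
  split <;> simp

theorem qcast_stdB (i : ℕ) : qcast (stdB ℤ g i) = stdB ℚ g i := by
  funext j
  simp only [qcast, stdB]
  split <;> simp

/-- symp z (stdA i) = 0 if z kills coord 2i+1. -/
theorem symp_stdA_right_of_coordZero {m : ℕ} {z : Fin (2 * g) → R}
    (hz : z ∈ coordZero R (2 * g) m) (i : ℕ) (hi : 2 * i + 1 < m) (hm : m ≤ 2 * g) :
    symp z (stdA R g i) = 0 := by
  have hig : i < g := by omega
  rw [symp_stdA_right i hig, hz _ (by simpa using hi), neg_zero]

theorem symp_stdB_right_of_coordZero {m : ℕ} {z : Fin (2 * g) → R}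
    (hz : z ∈ coordZero R (2 * g) m) (i : ℕ) (hi : 2 * i < m) (hm : m ≤ 2 * g) :
    symp z (stdB R g i) = 0 := by
  have hig : i < g := by omega
  rw [symp_stdB_right i hig, hz _ (by simpa using hi)]

/-- The symplectic form as a mathlib bilinear form. -/
def sympForm (R : Type*) [CommRing R] (g : ℕ) :
    LinearMap.BilinForm R (Fin (2 * g) → R) :=
  LinearMap.mk₂ R symp symp_add_left
    (fun c x y => by rw [symp_smul_left]; rfl)
    (fun a x y => symp_add_right x y a)
    (fun c x y => by rw [symp_smul_right]; rfl)

@[simp] theorem sympForm_apply (x y : Fin (2 * g) → R) : sympForm R g x y = symp x y := rfl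

theorem sympForm_isRefl : (sympForm R g).IsRefl := by
  apply LinearMap.IsAlt.isRefl
  intro x
  exact symp_self x

/-- Nondegeneracy of symp on coordZero (2*l) when l ≤ g. -/
theorem coordZero_nondeg {l : ℕ} (hlg : l ≤ g) {K : Type*} [Field K]
    {z : Fin (2 * g) → K} (hz : z ∈ coordZero K (2 * g) (2 * l))
    (h : ∀ w ∈ coordZero K (2 * g) (2 * l), symp z w = 0) : z = 0 := by
  funext j
  rcases lt_or_ge (j : ℕ) (2 * l) with hj | hj
  · exact hz j hj
  · -- j = 2i or 2i+1 with l ≤ i < g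
    have hj2 : (j : ℕ) < 2 * g := j.2
    rcases Nat.even_or_odd (j : ℕ) with ⟨i, hi⟩ | ⟨i, hi⟩
    · have hig : i < g := by omega
      have := h (stdB K g i) (stdB_mem_coordZero i (2 * l) (by omega))
      rw [symp_stdB_right i hig] at this
      convert this using 2
      ext; simp; omega
      rfl
    · have hig : i < g := by omega
      have := h (stdA K g i) (stdA_mem_coordZero i (2 * l) (by omega))
      rw [symp_stdA_right i hig] at this
      have : z ⟨2 * i + 1, by omega⟩ = 0 := neg_eq_zero.mp this
      convert this using 2
      ext; simp; omega
      rfl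

end Helpers2
section Helpers3

variable {g : ℕ}

/-- Double-orthogonal key lemma inside a nondegenerate coordinate subspace. -/
theorem key_double_perp (C T : Submodule ℚ (Fin (2 * g) → ℚ)) (hTC : T ≤ C)
    (hnd : ∀ z ∈ C, (∀ w ∈ C, symp z w = 0) → z = 0)
    (u : Fin (2 * g) → ℚ) (huC : u ∈ C)
    (h : ∀ z ∈ C, (∀ t ∈ T, symp z t = 0) → symp z u = 0) : u ∈ T := by
  classical
  set B : LinearMap.BilinForm ℚ ↥C := (sympForm ℚ g).restrict C with hB
  have hBapp : ∀ z w : ↥C, B z w = symp (z : Fin (2 * g) → ℚ) (w : Fin (2 * g) → ℚ) :=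
    fun z w => rfl
  have hrefl : B.IsRefl := by
    intro z w hzw
    rw [hBapp] at hzw ⊢
    rw [symp_antisymm, hzw, neg_zero]
  have hndB : B.Nondegenerate := by
    refine (LinearMap.IsRefl.nondegenerate_iff_separatingLeft hrefl).mpr ?_
    intro z hz
    have : (z : Fin (2 * g) → ℚ) = 0 := by
      apply hnd z z.2
      intro w hw
      exact hz ⟨w, hw⟩
    exact Subtype.ext this
  set T' : Submodule ℚ ↥C := T.comap C.subtype with hT'
  have key := LinearMap.BilinForm.orthogonal_orthogonal hndB hrefl T'
  have hu' : (⟨u, huC⟩ : ↥C) ∈ B.orthogonal (B.orthogonal T') := by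
    intro z hz
    -- z ∈ orthogonal T' : ∀ t ∈ T', B t z = 0
    have hz0 : ∀ t ∈ T, symp (z : Fin (2 * g) → ℚ) t = 0 := by
      intro t ht
      have := hz ⟨t, hTC ht⟩ (by simpa [hT', Submodule.mem_comap] using ht)
      rw [hBapp] at this
      rw [symp_antisymm, this, neg_zero]
    have := h z z.2 hz0
    rw [hBapp]
    exact this
  rw [key] at hu'
  simpa [hT', Submodule.mem_comap] using hu'

end Helpers3
section Helpers4

/-- Bezout for Finset.gcd over ℤ. -/
theorem exists_bezout {ι : Type*} [DecidableEq ι] (s : Finset ι) (f : ι → ℤ) :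
    ∃ c : ι → ℤ, ∑ j ∈ s, c j * f j = s.gcd f := by
  classical
  induction s using Finset.induction_on with
  | empty => exact ⟨0, by simp⟩
  | @insert a s ha ih =>
    obtain ⟨c, hc⟩ := ih
    rw [Finset.gcd_insert]
    have hgg : (gcd (f a) (s.gcd f) : ℤ)
        = f a * Int.gcdA (f a) (s.gcd f) + (s.gcd f) * Int.gcdB (f a) (s.gcd f) := by
      rw [← Int.gcd_eq_gcd_ab, Int.coe_gcd]
    refine ⟨fun j => if j = a then Int.gcdA (f a) (s.gcd f)
      else Int.gcdB (f a) (s.gcd f) * c j, ?_⟩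
    have hsum : ∑ x ∈ s, (if x = a then Int.gcdA (f a) (s.gcd f)
        else Int.gcdB (f a) (s.gcd f) * c x) * f x
        = Int.gcdB (f a) (s.gcd f) * ∑ j ∈ s, c j * f j := by
      rw [Finset.mul_sum]
      apply Finset.sum_congr rfl
      intro j hj
      rw [if_neg (by rintro rfl; exact ha hj)]
      ring
    simp only [Finset.sum_insert ha]
    rw [hsum, hc, if_pos trivial, hgg]
    ring

/-- A vector admitting a Bezout functional is primitive. -/
theorem primitive_of_bezout {n : ℕ} (y : Fin n → ℤ) (c : Fin n → ℤ)
    (h : ∑ j, c j * y j = 1) : Primitive y := by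
  classical
  set f : (Fin n → ℤ) →ₗ[ℤ] ℤ :=
    { toFun := fun w => ∑ j, c j * w j
      map_add' := by
        intro w₁ w₂
        rw [← Finset.sum_add_distrib]
        exact Finset.sum_congr rfl fun j _ => by simp [mul_add]
      map_smul' := by
        intro m w
        simp only [Pi.smul_apply, smul_eq_mul, RingHom.id_apply, Finset.mul_sum]
        exact Finset.sum_congr rfl fun j _ => by ring } with hf
  have hfy : f y = 1 := h
  have hy0 : y ≠ 0 := by
    rintro rfl
    simp [hf] at hfy
  have hr : Set.range ![y] = {y} := by
    ext z
    constructor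
    · rintro ⟨i, rfl⟩; fin_cases i; simp
    · rintro rfl; exact ⟨0, rfl⟩
  constructor
  · apply Fintype.linearIndependent_iff.mpr
    intro a ha i
    fin_cases i
    have h1 : a 0 • y = 0 := by simpa using ha
    have h2 := congrArg f h1
    rw [map_smul, hfy, map_zero] at h2
    simpa using h2
  · refine ⟨LinearMap.ker f, ?_⟩
    constructor
    · rw [Submodule.disjoint_def]
      intro w hw hwk
      rw [hr, Submodule.mem_span_singleton] at hw
      obtain ⟨a, rfl⟩ := hw
      have : f (a • y) = 0 := hwk
      rw [map_smul, hfy, smul_eq_mul, mul_one] at this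
      rw [this, zero_smul]
    · rw [codisjoint_iff_le_sup]
      intro w _
      have hyT : y ∈ Submodule.span ℤ (Set.range ![y]) :=
        Submodule.subset_span (by rw [hr]; rfl)
      have hsplit : w = f w • y + (w - f w • y) := by abel
      rw [hsplit]
      apply Submodule.add_mem_sup (Submodule.smul_mem _ _ hyT)
      have : f (w - f w • y) = 0 := by
        rw [map_sub, map_smul, hfy, smul_eq_mul, mul_one, sub_self]
      exact this

/-- Rescale a nonzero rational vector to a primitive integer vector. -/
theorem exists_primitive_rescale {n : ℕ} (u : Fin n → ℚ) (hu : u ≠ 0) :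
    ∃ (y : Fin n → ℤ) (q : ℚ), q ≠ 0 ∧ qcast y = q • u ∧ Primitive y := by
  classical
  set N : ℕ := ∏ j, (u j).den with hN
  have hNpos : 0 < N := Finset.prod_pos fun j _ => (u j).pos
  have hden : ∀ j, ((u j).den : ℤ) ∣ (N : ℤ) := by
    intro j
    exact_mod_cast Int.natCast_dvd_natCast.mpr (Finset.dvd_prod_of_mem _ (Finset.mem_univ j))
  set w : Fin n → ℤ := fun j => (u j).num * ((N : ℤ) / ((u j).den : ℤ)) with hw
  have hwq : ∀ j, (w j : ℚ) = (N : ℚ) * u j := by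
    intro j
    have hd : ((u j).den : ℤ) * ((N : ℤ) / ((u j).den : ℤ)) = (N : ℤ) :=
      Int.mul_ediv_cancel' (hden j)
    have h1 : (u j) * ((u j).den : ℚ) = ((u j).num : ℚ) := Rat.mul_den_eq_num _
    have h2 : ((N : ℤ) : ℚ) = (((u j).den : ℤ) : ℚ) * (((N : ℤ) / ((u j).den : ℤ) : ℤ) : ℚ) := by
      exact_mod_cast congrArg (fun z : ℤ => (z : ℚ)) hd.symm
    have h3 : ((N : ℚ)) = (((u j).den : ℤ) : ℚ) * (((N : ℤ) / ((u j).den : ℤ) : ℤ) : ℚ) := by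
      exact_mod_cast h2
    rw [h3, hw]
    push_cast
    rw [← h1]
    ring
  have hw0 : w ≠ 0 := by
    intro h0
    apply hu
    funext j
    have h2 := hwq j
    rw [h0] at h2
    simp only [Pi.zero_apply, Int.cast_zero] at h2
    have hN0 : (N : ℚ) ≠ 0 := by exact_mod_cast hNpos.ne'
    rcases mul_eq_zero.mp h2.symm with h | h
    · exact absurd h hN0
    · simpa using h
  set d : ℤ := Finset.univ.gcd w with hd
  have hd0 : d ≠ 0 := by
    rw [hd, Ne, Finset.gcd_eq_zero_iff]
    intro h
    exact hw0 (funext fun j => h j (Finset.mem_univ j))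
  have hddvd : ∀ j, d ∣ w j := fun j => Finset.gcd_dvd (Finset.mem_univ j)
  set y : Fin n → ℤ := fun j => w j / d with hy
  have hwy : ∀ j, w j = d * y j := fun j => (Int.mul_ediv_cancel' (hddvd j)).symm
  obtain ⟨c, hc⟩ := exists_bezout Finset.univ w
  have hcy : ∑ j, c j * y j = 1 := by
    have hstep : d * ∑ j, c j * y j = ∑ j, c j * w j := by
      rw [Finset.mul_sum]
      exact Finset.sum_congr rfl fun j _ => by rw [hwy j]; ring
    have hstep2 : d * ∑ j, c j * y j = d * 1 := by rw [hstep, hc, ← hd, mul_one]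
    exact mul_left_cancel₀ hd0 hstep2
  have hdq : (d : ℚ) ≠ 0 := by exact_mod_cast hd0
  have hN0 : (N : ℚ) ≠ 0 := by exact_mod_cast hNpos.ne'
  refine ⟨y, (N : ℚ) / (d : ℚ), div_ne_zero hN0 hdq, ?_, primitive_of_bezout y c hcy⟩
  funext j
  have hh : (d : ℚ) * (y j : ℚ) = (N : ℚ) * u j := by
    rw [← hwq j, hwy j]; push_cast; ring
  simp only [qcast, Pi.smul_apply, smul_eq_mul]
  rw [div_mul_eq_mul_div, eq_div_iff hdq]
  linarith [hh]

end Helpers4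
section Helpers5

variable {R : Type*} [CommRing R] {g : ℕ}

theorem mem_perp {A : Set (Fin (2 * g) → R)} {z : Fin (2 * g) → R} :
    z ∈ perp A ↔ ∀ a ∈ A, symp z a = 0 := Iff.rfl

theorem mem_coordZero_iff {n m : ℕ} {z : Fin n → R} :
    z ∈ coordZero R n m ↔ ∀ j : Fin n, (j : ℕ) < m → z j = 0 := Iff.rfl

theorem qcast_mem_coordZero_iff {n m : ℕ} {w : Fin n → ℤ} :
    qcast w ∈ coordZero ℚ n m ↔ w ∈ coordZero ℤ n m := by
  constructor
  · intro h j hj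
    have := h j hj
    simp only [qcast] at this
    exact_mod_cast this
  · intro h j hj
    simp only [qcast, h j hj, Int.cast_zero]

theorem coordZero_mono {n m m' : ℕ} (h : m' ≤ m) :
    coordZero R n m ≤ coordZero R n m' := fun z hz j hj => hz j (lt_of_lt_of_le hj h)

theorem symp_stdA_left (i : ℕ) (hi : i < g) (z : Fin (2 * g) → R) :
    symp (stdA R g i) z = z ⟨2 * i + 1, by omega⟩ := by
  rw [symp_antisymm, symp_stdA_right i hi, neg_neg]

theorem symp_stdB_left (i : ℕ) (hi : i < g) (z : Fin (2 * g) → R) :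
    symp (stdB R g i) z = - z ⟨2 * i, by omega⟩ := by
  rw [symp_antisymm, symp_stdB_right i hi]

theorem primitive_of_coord_eq_one {n : ℕ} (y : Fin n → ℤ) (p : Fin n) (h : y p = 1) :
    Primitive y := by
  classical
  apply primitive_of_bezout y (fun q => if q = p then 1 else 0)
  rw [Finset.sum_eq_single p]
  · rw [if_pos rfl, one_mul, h]
  · intro b _ hb
    rw [if_neg hb, zero_mul]
  · simp

theorem primitive_stdA (i : ℕ) (hi : i < g) : Primitive (stdA ℤ g i) :=
  primitive_of_coord_eq_one _ ⟨2 * i, by omega⟩ (by simp [stdA])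

theorem primitive_stdB (i : ℕ) (hi : i < g) : Primitive (stdB ℤ g i) :=
  primitive_of_coord_eq_one _ ⟨2 * i + 1, by omega⟩ (by simp [stdB])

theorem perp_span {g : ℕ} (z : Fin (2 * g) → ℚ) (S : Set (Fin (2 * g) → ℚ))
    (h : ∀ s ∈ S, symp z s = 0) :
    ∀ t ∈ Submodule.span ℚ S, symp z t = 0 := by
  intro t ht
  induction ht using Submodule.span_induction with
  | mem s hs => exact h s hs
  | zero => exact symp_zero_right z
  | add s t _ _ hs ht => rw [symp_add_right, hs, ht, add_zero]
  | smul c s _ hs => rw [symp_smul_right, hs, mul_zero]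

theorem stdA_apply (i : ℕ) (p : Fin (2 * g)) :
    stdA R g i p = if (p : ℕ) = 2 * i then 1 else 0 := rfl

theorem stdB_apply (i : ℕ) (p : Fin (2 * g)) :
    stdB R g i p = if (p : ℕ) = 2 * i + 1 then 1 else 0 := rfl

theorem symp_sub_left {g : ℕ} (x y a : Fin (2 * g) → ℚ) :
    symp (x - y) a = symp x a - symp y a :=
  map_sub ((sympForm ℚ g).flip a) x y

theorem symp_sum_left {g : ℕ} {ι : Type*} (s : Finset ι) (F : ι → Fin (2 * g) → ℚ)
    (a : Fin (2 * g) → ℚ) :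
    symp (∑ i ∈ s, F i) a = ∑ i ∈ s, symp (F i) a :=
  map_sum ((sympForm ℚ g).flip a) F s

end Helpers5
/-- Lemma 3.15 — existence of a good basis of `⟨x,x'⟩^⊥`. -/
theorem stmt15 (g k : ℕ) (hk1 : 1 ≤ k) (hk5 : k ≤ 5)
    (x x' : Fin (2 * g) → ℤ)
    (hxH : x ∈ coordZero ℤ (2 * g) (2 * (k - 1)))
    (hx'H : x' ∈ coordZero ℤ (2 * g) (2 * (k - 1)))
    (hxx' : symp x x' = 0)
    (hgcd2 : IsUnimodular ![x, x'])
    (v : Fin 4 → Fin (2 * g) → ℤ)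
    (hva : ∀ j : Fin 4, (j : ℕ) < k - 1 → v j = stdA ℤ g (j : ℕ))
    (hvprim : ∀ j : Fin 4, k - 1 ≤ (j : ℕ) → Primitive (v j) ∧
      (v j ∈ coordZero ℤ (2 * g) (2 * k) ∨ ∃ i < 4, v j = stdA ℤ g i))
    (horth : ∀ i j, i ≠ j →
      symp (![x, v 0, v 1, v 2, v 3] i) (![x, v 0, v 1, v 2, v 3] j) = 0)
    (hgcd5 : IsUnimodular ![x, v 0, v 1, v 2, v 3])
    (hli : LinearIndependent ℚ
      ![qcast x, qcast x', qcast (v 0), qcast (v 1), qcast (v 2), qcast (v 3)]) :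
    ∃ B : Set (Fin (2 * g) → ℚ),
      LinearIndependent ℚ (fun z : B => (z : Fin (2 * g) → ℚ)) ∧
      Submodule.span ℚ B = perp {qcast x, qcast x'} ∧
      (∀ j : ℕ, j < k - 1 → stdA ℚ g j ∈ B ∧ stdB ℚ g j ∈ B) ∧
      (∀ z ∈ B, (∃ j : ℕ, j < k - 1 ∧ z = stdB ℚ g j) ∨
        ∃ y : Fin (2 * g) → ℤ, Primitive y ∧
          (y ∈ coordZero ℤ (2 * g) (2 * (k - 1)) ∨ ∃ i < 4, y = stdA ℤ g i) ∧
          z = qcast y) ∧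
      ∀ z ∈ B, 3 ≤ (Finset.univ.filter fun j : Fin 4 => symp z (qcast (v j)) = 0).card := by
  classical
  set kk : ℕ := k - 1 with hkk
  have hkk4 : kk ≤ 4 := by omega
  set qx : Fin (2 * g) → ℚ := qcast x with hqx
  set qx' : Fin (2 * g) → ℚ := qcast x' with hqx'
  set qv : Fin 4 → Fin (2 * g) → ℚ := fun j => qcast (v j) with hqv
  set m6 : Fin 6 → Fin (2 * g) → ℚ :=
    ![qcast x, qcast x', qcast (v 0), qcast (v 1), qcast (v 2), qcast (v 3)] with hm6
  have hm6j : ∀ j : Fin 4, m6 ⟨(j : ℕ) + 2, by omega⟩ = qv j := by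
    intro j; fin_cases j <;> rfl
  have hvli : LinearIndependent ℤ ![x, v 0, v 1, v 2, v 3] := hgcd5.1
  have hv5 : ∀ i : Fin 4, ![x, v 0, v 1, v 2, v 3] i.succ = v i := by
    intro i; fin_cases i <;> rfl
  have hvnz : ∀ j : Fin 4, v j ≠ 0 := by
    intro j h
    exact hvli.ne_zero j.succ (by rw [hv5 j, h])
  have hvinj : ∀ i j : Fin 4, v i = v j → i = j := by
    intro i j hij
    have hinj := LinearIndependent.injective hvli
    have h2 : (![x, v 0, v 1, v 2, v 3]) i.succ = (![x, v 0, v 1, v 2, v 3]) j.succ := by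
      rw [hv5 i, hv5 j, hij]
    exact Fin.succ_injective _ (hinj h2)
  have hkg : kk ≤ g := by
    by_contra hgk
    push_neg at hgk
    have hg4 : g < 4 := by omega
    have h1 : v ⟨g, by omega⟩ = stdA ℤ g g := hva ⟨g, by omega⟩ (by simpa using by omega)
    rw [stdA_eq_zero g le_rfl] at h1
    exact hvnz _ h1
  have hqvstd : ∀ j : Fin 4, (j : ℕ) < kk → qv j = stdA ℚ g (j : ℕ) := by
    intro j hj
    show qcast (v j) = _
    rw [hva j hj, qcast_stdA]
  set C : Submodule ℚ (Fin (2 * g) → ℚ) := coordZero ℚ (2 * g) (2 * kk) with hC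
  have hxC : qx ∈ C := qcast_mem_coordZero_iff.mpr hxH
  have hx'C : qx' ∈ C := qcast_mem_coordZero_iff.mpr hx'H
  have hvC : ∀ j : Fin 4, kk ≤ (j : ℕ) → v j ∈ coordZero ℤ (2 * g) (2 * kk) := by
    intro j hj
    rcases (hvprim j hj).2 with hcz | ⟨i, hi4, hstd⟩
    · exact coordZero_mono (by omega) hcz
    · have hik : kk ≤ i := by
        by_contra hik
        push_neg at hik
        have h1 : v ⟨i, by omega⟩ = stdA ℤ g i := hva ⟨i, by omega⟩ (by simpa using hik)
        have h2 : v j = v ⟨i, by omega⟩ := by rw [hstd, h1]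
        have h3 := congrArg Fin.val (hvinj _ _ h2)
        simp at h3
        omega
      rw [hstd]
      exact stdA_mem_coordZero i _ (by omega)
  have hqvC : ∀ j : Fin 4, kk ≤ (j : ℕ) → qv j ∈ C := fun j hj =>
    qcast_mem_coordZero_iff.mpr (hvC j hj)
  have hnd : ∀ z ∈ C, (∀ w ∈ C, symp z w = 0) → z = 0 := fun z hz h =>
    coordZero_nondeg hkg hz h
  have hsympvv : ∀ i j : Fin 4, symp (qv i) (qv j) = 0 := by
    intro i j
    rcases eq_or_ne i j with rfl | hij
    · exact symp_self _
    · show symp (qcast (v i)) (qcast (v j)) = 0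
      rw [symp_qcast]
      have := horth i.succ j.succ (by simp [Fin.ext_iff]; intro h; exact hij (Fin.ext h))
      rw [hv5 i, hv5 j] at this
      rw [this]
      rfl
  have hsympxv : ∀ j : Fin 4, symp qx (qv j) = 0 := by
    intro j
    show symp (qcast x) (qcast (v j)) = 0
    rw [symp_qcast]
    have := horth 0 j.succ (Fin.succ_ne_zero j).symm
    rw [hv5 j] at this
    show ((symp x (v j) : ℤ) : ℚ) = 0
    rw [show symp x (v j) = 0 from this]
    rfl
  
  have hE : ∀ i : Fin 4, kk ≤ (i : ℕ) → ∃ e, e ∈ C ∧ symp e qx = 0 ∧ symp e qx' = 0 ∧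
      (∀ j : Fin 4, j ≠ i → symp e (qv j) = 0) ∧ symp e (qv i) ≠ 0 := by
    intro i hi
    by_contra hno
    push_neg at hno
    set S : Set (Fin (2 * g) → ℚ) :=
      insert qx (insert qx' {w | ∃ j : Fin 4, j ≠ i ∧ kk ≤ (j : ℕ) ∧ w = qv j}) with hS
    have hSC : ∀ s ∈ S, s ∈ C := by
      intro s hs
      rcases hs with rfl | hs
      · exact hxC
      rcases hs with rfl | ⟨j, hji, hjk, rfl⟩
      · exact hx'C
      · exact hqvC j hjk
    have hTC : Submodule.span ℚ S ≤ C := Submodule.span_le.mpr hSC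
    have hmem : qv i ∈ Submodule.span ℚ S := by
      apply key_double_perp C (Submodule.span ℚ S) hTC hnd (qv i) (hqvC i hi)
      intro z hzC hzT
      apply hno z hzC
      · exact hzT qx (Submodule.subset_span (by simp [hS]))
      · exact hzT qx' (Submodule.subset_span (by simp [hS]))
      · intro j hji
        rcases lt_or_ge (j : ℕ) kk with hjk | hjk
        · rw [hqvstd j hjk]
          exact symp_stdA_right_of_coordZero hzC (j : ℕ) (by omega) (by omega)
        · exact hzT (qv j) (Submodule.subset_span (by
            simp only [hS, Set.mem_insert_iff, Set.mem_setOf_eq]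
            exact Or.inr (Or.inr ⟨j, hji, hjk, rfl⟩)))
    have hsub : S ⊆ m6 '' {p : Fin 6 | p ≠ ⟨(i : ℕ) + 2, by omega⟩} := by
      intro s hs
      rcases hs with rfl | hs
      · exact ⟨0, by intro h; have h' : (0:ℕ) = (i:ℕ) + 2 := congrArg Fin.val h; omega, rfl⟩
      rcases hs with rfl | ⟨j, hji, hjk, rfl⟩
      · exact ⟨1, by intro h; have h' : (1:ℕ) = (i:ℕ) + 2 := congrArg Fin.val h; omega, rfl⟩
      · refine ⟨⟨(j : ℕ) + 2, by omega⟩, ?_, hm6j j⟩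
        simp only [Set.mem_setOf_eq]
        intro h
        rw [Fin.mk.injEq] at h
        exact hji (Fin.ext (by omega))
    have hmem2 : qv i ∈ Submodule.span ℚ (m6 '' {p : Fin 6 | p ≠ ⟨(i : ℕ) + 2, by omega⟩}) :=
      Submodule.span_mono hsub hmem
    rw [← hm6j i] at hmem2
    exact hli.notMem_span_image (by simp) hmem2
  
  have hE' : ∀ i : {i : Fin 4 // kk ≤ (i : ℕ)}, ∃ y : Fin (2 * g) → ℤ, Primitive y ∧
      y ∈ coordZero ℤ (2 * g) (2 * kk) ∧ symp (qcast y) qx = 0 ∧ symp (qcast y) qx' = 0 ∧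
      (∀ j : Fin 4, j ≠ (i : Fin 4) → symp (qcast y) (qv j) = 0) ∧
      symp (qcast y) (qv (i : Fin 4)) ≠ 0 := by
    rintro ⟨i, hi⟩
    obtain ⟨e, heC, hex, hex', hej, hei⟩ := hE i hi
    have he0 : e ≠ 0 := by rintro rfl; exact hei (symp_zero_left _)
    obtain ⟨y, q, hq0, hqy, hyprim⟩ := exists_primitive_rescale e he0
    refine ⟨y, hyprim, ?_, ?_, ?_, ?_, ?_⟩
    · exact qcast_mem_coordZero_iff.mp (by rw [hqy]; exact C.smul_mem q heC)
    · rw [hqy, symp_smul_left, hex, mul_zero]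
    · rw [hqy, symp_smul_left, hex', mul_zero]
    · intro j hji
      rw [hqy, symp_smul_left, hej j hji, mul_zero]
    · rw [hqy, symp_smul_left]
      exact mul_ne_zero hq0 hei
  choose yE hEprim hECz hEx hEx' hEj hEi using hE'
  set P0 : Submodule ℚ (Fin (2 * g) → ℚ) := perp {qx, qx'} with hP0
  set W : Submodule ℚ (Fin (2 * g) → ℚ) := P0 ⊓ C ⊓ perp (Set.range qv) with hW
  have hmemW : ∀ z, z ∈ W ↔ (z ∈ P0 ∧ z ∈ C ∧ ∀ j : Fin 4, symp z (qv j) = 0) := by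
    intro z
    rw [hW, Submodule.mem_inf, Submodule.mem_inf, and_assoc]
    refine and_congr_right fun _ => and_congr_right fun _ => ?_
    constructor
    · intro h j
      exact h (qv j) ⟨j, rfl⟩
    · rintro h a ⟨j, rfl⟩
      exact h j
  set dW : ℕ := Module.finrank ℚ ↥W with hdW
  set wb : Module.Basis (Fin dW) ℚ ↥W := Module.finBasis ℚ ↥W with hwb
  set Wfam : Fin dW → Fin (2 * g) → ℚ := fun t => ((wb t : ↥W) : Fin (2 * g) → ℚ) with hWfam
  have hWfamW : ∀ t, Wfam t ∈ W := fun t => (wb t).2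
  have hWfamli : LinearIndependent ℚ Wfam :=
    (wb.linearIndependent).map' W.subtype (Submodule.ker_subtype W)
  have hWfamspan : Submodule.span ℚ (Set.range Wfam) = W := by
    have h1 := wb.span_eq
    have h2 : Set.range Wfam = (W.subtype '' Set.range wb) := by
      rw [← Set.range_comp]; rfl
    rw [h2, ← Submodule.map_span, h1, Submodule.map_top, Submodule.range_subtype]
  have hWfam0 : ∀ t, Wfam t ≠ 0 := by
    intro t h
    exact wb.ne_zero t (Subtype.ext h)
  have hW' : ∀ t : Fin dW, ∃ (y : Fin (2 * g) → ℤ) (q : ℚ), Primitive y ∧ q ≠ 0 ∧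
      qcast y = q • Wfam t := by
    intro t
    obtain ⟨y, q, hq0, hqy, hyprim⟩ := exists_primitive_rescale (Wfam t) (hWfam0 t)
    exact ⟨y, q, hyprim, hq0, hqy⟩
  choose yW qW hWprim hWq0 hWqe using hW'
  have hyWW : ∀ t, qcast (yW t) ∈ W := fun t => by
    rw [hWqe t]; exact W.smul_mem _ (hWfamW t)
  have hyWli : LinearIndependent ℚ (fun t => qcast (yW t)) := by
    have h1 := hWfamli.units_smul (fun t => Units.mk0 (qW t) (hWq0 t))
    have h2 : (fun t => qcast (yW t)) = fun t => (Units.mk0 (qW t) (hWq0 t) : ℚˣ) • Wfam t := by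
      funext t; rw [hWqe t]; rfl
    rw [h2]
    exact h1
  have hyWspan : Submodule.span ℚ (Set.range fun t => qcast (yW t)) = W := by
    apply le_antisymm
    · rw [Submodule.span_le]
      rintro w ⟨t, rfl⟩
      exact hyWW t
    · rw [← hWfamspan, Submodule.span_le]
      rintro w ⟨t, rfl⟩
      have : Wfam t = (qW t)⁻¹ • qcast (yW t) := by
        rw [hWqe t, smul_smul, inv_mul_cancel₀ (hWq0 t), one_smul]
      rw [this]
      exact Submodule.smul_mem _ _ (Submodule.subset_span ⟨t, rfl⟩)
  
  have hkgg : kk ≤ g := hkg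
  set f : ((Fin kk ⊕ Fin kk) ⊕ ({i : Fin 4 // kk ≤ (i : ℕ)} ⊕ Fin dW)) → (Fin (2 * g) → ℚ) :=
    Sum.elim (Sum.elim (fun j => stdA ℚ g (j : ℕ)) (fun j => stdB ℚ g (j : ℕ)))
      (Sum.elim (fun i => qcast (yE i)) (fun t => qcast (yW t))) with hf
  have hyEC : ∀ i, qcast (yE i) ∈ C := fun i => qcast_mem_coordZero_iff.mpr (hECz i)
  have hyWC : ∀ t, qcast (yW t) ∈ C := fun t => ((hmemW _).mp (hyWW t)).2.1
  have hyWv : ∀ t (j : Fin 4), symp (qcast (yW t)) (qv j) = 0 :=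
    fun t j => ((hmemW _).mp (hyWW t)).2.2 j
  have hyWP0 : ∀ t, qcast (yW t) ∈ P0 := fun t => ((hmemW _).mp (hyWW t)).1
  -- symp values with std vectors
  have hAB : ∀ j j' : Fin kk, symp (stdA ℚ g (j' : ℕ)) (stdB ℚ g (j : ℕ))
      = if (j' : ℕ) = (j : ℕ) then 1 else 0 := by
    intro j j'
    rw [symp_stdB_right (j : ℕ) (by omega), stdA_apply]
    by_cases h : (j' : ℕ) = (j : ℕ)
    · rw [if_pos (show (2 * (j : ℕ) : ℕ) = 2 * (j' : ℕ) by omega), if_pos h]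
    · rw [if_neg (show ¬(2 * (j : ℕ) : ℕ) = 2 * (j' : ℕ) by omega), if_neg h]
  have hBB : ∀ j j' : Fin kk, symp (stdB ℚ g (j' : ℕ)) (stdB ℚ g (j : ℕ)) = 0 := by
    intro j j'
    rw [symp_stdB_right (j : ℕ) (by omega), stdB_apply]
    rw [if_neg (show ¬(2 * (j : ℕ) : ℕ) = 2 * (j' : ℕ) + 1 by omega)]
  have hAA : ∀ j j' : Fin kk, symp (stdA ℚ g (j' : ℕ)) (stdA ℚ g (j : ℕ)) = 0 := by
    intro j j'
    rw [symp_stdA_right (j : ℕ) (by omega), stdA_apply]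
    rw [if_neg (show ¬(2 * (j : ℕ) + 1 : ℕ) = 2 * (j' : ℕ) by omega), neg_zero]
  have hBA : ∀ j j' : Fin kk, symp (stdB ℚ g (j' : ℕ)) (stdA ℚ g (j : ℕ))
      = if (j' : ℕ) = (j : ℕ) then -1 else 0 := by
    intro j j'
    rw [symp_stdA_right (j : ℕ) (by omega), stdB_apply]
    by_cases h : (j' : ℕ) = (j : ℕ)
    · rw [if_pos (show (2 * (j : ℕ) + 1 : ℕ) = 2 * (j' : ℕ) + 1 by omega), if_pos h]
    · rw [if_neg (show ¬(2 * (j : ℕ) + 1 : ℕ) = 2 * (j' : ℕ) + 1 by omega), if_neg h, neg_zero]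
  have hCB : ∀ z ∈ C, ∀ j : Fin kk, symp z (stdB ℚ g (j : ℕ)) = 0 := by
    intro z hz j
    exact symp_stdB_right_of_coordZero hz (j : ℕ) (by omega) (by omega)
  have hCA : ∀ z ∈ C, ∀ j : Fin kk, symp z (stdA ℚ g (j : ℕ)) = 0 := by
    intro z hz j
    exact symp_stdA_right_of_coordZero hz (j : ℕ) (by omega) (by omega)
  have hAC : ∀ z ∈ C, ∀ j : Fin kk, symp (stdA ℚ g (j : ℕ)) z = 0 := by
    intro z hz j
    rw [symp_antisymm, hCA z hz j, neg_zero]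
  have hBC : ∀ z ∈ C, ∀ j : Fin kk, symp (stdB ℚ g (j : ℕ)) z = 0 := by
    intro z hz j
    rw [symp_antisymm, hCB z hz j, neg_zero]
  have hind : LinearIndependent ℚ f := by
    rw [Fintype.linearIndependent_iff]
    intro c hc
    have happ : ∀ t, ∑ i, c i * symp (f i) t = 0 := by
      intro t
      have h1 := congrArg ((sympForm ℚ g).flip t) hc
      rw [map_zero, map_sum] at h1
      simpa using h1
    have hkey : ∀ i₀ t, symp (f i₀) t ≠ 0 → (∀ b, b ≠ i₀ → symp (f b) t = 0) →
        c i₀ = 0 := by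
      intro i₀ t hnz hvan
      have hone := happ t
      rw [Finset.sum_eq_single i₀ (fun b _ hb => by rw [hvan b hb, mul_zero])
        (fun h => absurd (Finset.mem_univ i₀) h)] at hone
      exact (mul_eq_zero.mp hone).resolve_right hnz
    have hcA : ∀ j : Fin kk, c (Sum.inl (Sum.inl j)) = 0 := by
      intro j
      apply hkey _ (stdB ℚ g (j : ℕ))
      · show symp (stdA ℚ g (j : ℕ)) (stdB ℚ g (j : ℕ)) ≠ 0
        rw [hAB j j, if_pos rfl]
        norm_num
      · rintro ((j' | j') | (i' | t')) hb
        · show symp (stdA ℚ g (j' : ℕ)) (stdB ℚ g (j : ℕ)) = 0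
          rw [hAB j j', if_neg]
          intro h
          exact hb (by rw [show j' = j from Fin.ext h])
        · exact hBB j j'
        · exact hCB _ (hyEC i') j
        · exact hCB _ (hyWC t') j
    have hcB : ∀ j : Fin kk, c (Sum.inl (Sum.inr j)) = 0 := by
      intro j
      apply hkey _ (stdA ℚ g (j : ℕ))
      · show symp (stdB ℚ g (j : ℕ)) (stdA ℚ g (j : ℕ)) ≠ 0
        rw [hBA j j, if_pos rfl]
        norm_num
      · rintro ((j' | j') | (i' | t')) hb
        · exact hAA j j'
        · show symp (stdB ℚ g (j' : ℕ)) (stdA ℚ g (j : ℕ)) = 0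
          rw [hBA j j', if_neg]
          intro h
          exact hb (by rw [show j' = j from Fin.ext h])
        · exact hCA _ (hyEC i') j
        · exact hCA _ (hyWC t') j
    have hcE : ∀ i : {i : Fin 4 // kk ≤ (i : ℕ)}, c (Sum.inr (Sum.inl i)) = 0 := by
      intro i
      apply hkey _ (qv (i : Fin 4))
      · exact hEi i
      · rintro ((j' | j') | (i' | t')) hb
        · exact hAC _ (hqvC _ i.2) j'
        · exact hBC _ (hqvC _ i.2) j'
        · apply hEj i'
          intro h
          exact hb (by rw [show i' = i from Subtype.ext h.symm])
        · exact hyWv t' (i : Fin 4)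
    intro b
    rcases b with (j | j) | (i | t)
    · exact hcA j
    · exact hcB j
    · exact hcE i
    · -- reduce hc to the W-part
      have e1 : ∑ j : Fin kk, c (Sum.inl (Sum.inl j)) • f (Sum.inl (Sum.inl j)) = 0 :=
        Finset.sum_eq_zero fun j _ => by rw [hcA j, zero_smul]
      have e2 : ∑ j : Fin kk, c (Sum.inl (Sum.inr j)) • f (Sum.inl (Sum.inr j)) = 0 :=
        Finset.sum_eq_zero fun j _ => by rw [hcB j, zero_smul]
      have e3 : ∑ i : {i : Fin 4 // kk ≤ (i : ℕ)},
          c (Sum.inr (Sum.inl i)) • f (Sum.inr (Sum.inl i)) = 0 :=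
        Finset.sum_eq_zero fun i _ => by rw [hcE i, zero_smul]
      rw [Fintype.sum_sum_type, Fintype.sum_sum_type, Fintype.sum_sum_type, e1, e2, e3,
        zero_add, zero_add, zero_add] at hc
      exact Fintype.linearIndependent_iff.mp hyWli (fun t => c (Sum.inr (Sum.inr t))) hc t
  
  -- membership of the family in P0
  have hAP0 : ∀ j : Fin kk, stdA ℚ g (j : ℕ) ∈ P0 ∧ stdB ℚ g (j : ℕ) ∈ P0 := by
    intro j
    constructor
    · apply mem_perp.mpr
      rintro a (rfl | rfl)
      · exact hAC _ hxC j
      · exact hAC _ hx'C j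
    · apply mem_perp.mpr
      rintro a (rfl | rfl)
      · exact hBC _ hxC j
      · exact hBC _ hx'C j
  have hEP0 : ∀ i, qcast (yE i) ∈ P0 := by
    intro i
    apply mem_perp.mpr
    rintro a (rfl | rfl)
    · exact hEx i
    · exact hEx' i
  have hspan : Submodule.span ℚ (Set.range f) = P0 := by
    apply le_antisymm
    · rw [Submodule.span_le]
      rintro w ⟨b, rfl⟩
      rcases b with (j | j) | (i | t)
      · exact (hAP0 j).1
      · exact (hAP0 j).2
      · exact hEP0 i
      · exact hyWP0 t
    · intro z hz
      set zA : Fin (2 * g) → ℚ := ∑ j : Fin kk,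
        (z ⟨2 * (j : ℕ), by omega⟩ • stdA ℚ g (j : ℕ) +
          z ⟨2 * (j : ℕ) + 1, by omega⟩ • stdB ℚ g (j : ℕ)) with hzA
      have hzA_span : zA ∈ Submodule.span ℚ (Set.range f) := by
        apply Submodule.sum_mem
        intro j _
        apply Submodule.add_mem
        · exact Submodule.smul_mem _ _ (Submodule.subset_span ⟨Sum.inl (Sum.inl j), rfl⟩)
        · exact Submodule.smul_mem _ _ (Submodule.subset_span ⟨Sum.inl (Sum.inr j), rfl⟩)
      have hzAP0 : zA ∈ P0 := by
        apply Submodule.sum_mem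
        intro j _
        exact P0.add_mem (P0.smul_mem _ (hAP0 j).1) (P0.smul_mem _ (hAP0 j).2)
      set z1 : Fin (2 * g) → ℚ := z - zA with hz1
      have hz1C : z1 ∈ C := by
        intro p hp
        have hp2 : (p : ℕ) / 2 < kk := by omega
        have hzAp : zA p = z p := by
          rw [hzA, Finset.sum_apply, Finset.sum_eq_single (⟨(p : ℕ) / 2, hp2⟩ : Fin kk)]
          · simp only [Pi.add_apply, Pi.smul_apply, smul_eq_mul, stdA_apply, stdB_apply]
            rcases Nat.even_or_odd (p : ℕ) with ⟨m, hm⟩ | ⟨m, hm⟩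
            · rw [if_pos (show (p : ℕ) = 2 * ((p : ℕ) / 2) by omega),
                if_neg (show ¬(p : ℕ) = 2 * ((p : ℕ) / 2) + 1 by omega)]
              rw [mul_one, mul_zero, add_zero]
              congr 1
              exact Fin.ext (show 2 * ((p : ℕ) / 2) = (p : ℕ) by omega)
            · rw [if_neg (show ¬(p : ℕ) = 2 * ((p : ℕ) / 2) by omega),
                if_pos (show (p : ℕ) = 2 * ((p : ℕ) / 2) + 1 by omega)]
              rw [mul_zero, mul_one, zero_add]
              congr 1
              exact Fin.ext (show 2 * ((p : ℕ) / 2) + 1 = (p : ℕ) by omega)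
          · intro b _ hb
            simp only [Pi.add_apply, Pi.smul_apply, smul_eq_mul, stdA_apply, stdB_apply]
            have hbne : (b : ℕ) ≠ (p : ℕ) / 2 := fun h => hb (Fin.ext h)
            rw [if_neg (show ¬(p : ℕ) = 2 * (b : ℕ) by omega),
              if_neg (show ¬(p : ℕ) = 2 * (b : ℕ) + 1 by omega)]
            simp
          · intro h
            exact absurd (Finset.mem_univ _) h
        show (z - zA) p = 0
        simp [Pi.sub_apply, hzAp]
      have hz1P0 : z1 ∈ P0 := Submodule.sub_mem _ hz hzAP0
      set d : {i : Fin 4 // kk ≤ (i : ℕ)} → ℚ :=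
        fun i => symp z1 (qv (i : Fin 4)) / symp (qcast (yE i)) (qv (i : Fin 4)) with hd
      set z2 : Fin (2 * g) → ℚ := z1 - ∑ i, d i • qcast (yE i) with hz2
      have hz2C : z2 ∈ C :=
        Submodule.sub_mem _ hz1C
          (Submodule.sum_mem _ fun i _ => Submodule.smul_mem _ _ (hyEC i))
      have hz2P0 : z2 ∈ P0 :=
        Submodule.sub_mem _ hz1P0
          (Submodule.sum_mem _ fun i _ => Submodule.smul_mem _ _ (hEP0 i))
      have hz2W : z2 ∈ W := by
        rw [hmemW]
        refine ⟨hz2P0, hz2C, ?_⟩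
        intro j
        rcases lt_or_ge (j : ℕ) kk with hjk | hjk
        · rw [hqvstd j hjk]
          exact symp_stdA_right_of_coordZero hz2C (j : ℕ) (by omega) (by omega)
        · have hexp : symp z2 (qv j) =
              symp z1 (qv j) - ∑ i, d i * symp (qcast (yE i)) (qv j) := by
            rw [hz2, symp_sub_left, symp_sum_left]
            congr 1
            exact Finset.sum_congr rfl fun i _ => symp_smul_left _ _ _
          rw [hexp, Finset.sum_eq_single (⟨j, hjk⟩ : {i : Fin 4 // kk ≤ (i : ℕ)})]
          · rw [hd]
            rw [div_mul_cancel₀ _ (hEi ⟨j, hjk⟩), sub_self]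
          · intro b _ hb
            rw [hEj b j (fun h => hb (Subtype.ext h.symm)), mul_zero]
          · intro h
            exact absurd (Finset.mem_univ _) h
      have hz_decomp : z = zA + (∑ i, d i • qcast (yE i)) + z2 := by
        rw [hz2, hz1]
        abel
      rw [hz_decomp]
      apply Submodule.add_mem
      · apply Submodule.add_mem _ hzA_span
        exact Submodule.sum_mem _ fun i _ =>
          Submodule.smul_mem _ _ (Submodule.subset_span ⟨Sum.inr (Sum.inl i), rfl⟩)
      · rw [← hyWspan] at hz2W
        refine Submodule.span_mono ?_ hz2W
        rintro w ⟨t, rfl⟩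
        exact ⟨Sum.inr (Sum.inr t), rfl⟩
  
  refine ⟨Set.range f, hind.linearIndepOn_id, hspan, ?_, ?_, ?_⟩
  · -- condition 3
    intro j hj
    exact ⟨⟨Sum.inl (Sum.inl ⟨j, hj⟩), rfl⟩, ⟨Sum.inl (Sum.inr ⟨j, hj⟩), rfl⟩⟩
  · -- condition 4
    rintro z ⟨b, rfl⟩
    rcases b with (j | j) | (i | t)
    · refine Or.inr ⟨stdA ℤ g (j : ℕ), primitive_stdA _ (by omega),
        Or.inr ⟨(j : ℕ), by omega, rfl⟩, (qcast_stdA _).symm⟩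
    · exact Or.inl ⟨(j : ℕ), j.2, rfl⟩
    · exact Or.inr ⟨yE i, hEprim i, Or.inl (hECz i), rfl⟩
    · exact Or.inr ⟨yW t, hWprim t, Or.inl (qcast_mem_coordZero_iff.mp (hyWC t)), rfl⟩
  · -- condition 5
    rintro z ⟨b, rfl⟩
    rcases b with (j | j) | (i | t) <;>
      simp only [hf, Sum.elim_inl, Sum.elim_inr]
    · have hall : ∀ m : Fin 4, symp (stdA ℚ g (j : ℕ)) (qcast (v m)) = 0 := by
        intro m
        rcases lt_or_ge (m : ℕ) kk with hmk | hmk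
        · show symp (stdA ℚ g (j : ℕ)) (qv m) = 0
          rw [hqvstd m hmk]
          exact hAA ⟨(m : ℕ), hmk⟩ j
        · exact hAC _ (hqvC m hmk) j
      show (3 : ℕ) ≤ _
      rw [Finset.filter_true_of_mem (fun m _ => hall m)]
      simp
    · have hsub : Finset.univ.erase (⟨(j : ℕ), lt_of_lt_of_le j.2 hkk4⟩ : Fin 4) ⊆
          Finset.univ.filter (fun m : Fin 4 => symp (stdB ℚ g (j : ℕ)) (qcast (v m)) = 0) := by
        intro m hm
        rw [Finset.mem_erase] at hm
        rw [Finset.mem_filter]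
        refine ⟨Finset.mem_univ _, ?_⟩
        rcases lt_or_ge (m : ℕ) kk with hmk | hmk
        · show symp (stdB ℚ g (j : ℕ)) (qv m) = 0
          rw [hqvstd m hmk, hBA ⟨(m : ℕ), hmk⟩ j, if_neg]
          intro h
          exact hm.1 (Fin.ext h.symm)
        · exact hBC _ (hqvC m hmk) j
      calc (3 : ℕ) = (Finset.univ.erase (⟨(j : ℕ), lt_of_lt_of_le j.2 hkk4⟩ : Fin 4)).card := by
            rw [Finset.card_erase_of_mem (Finset.mem_univ _)]
            simp
        _ ≤ _ := Finset.card_le_card hsub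
    · have hsub : Finset.univ.erase (i : Fin 4) ⊆
          Finset.univ.filter (fun m : Fin 4 => symp (qcast (yE i)) (qcast (v m)) = 0) := by
        intro m hm
        rw [Finset.mem_erase] at hm
        rw [Finset.mem_filter]
        refine ⟨Finset.mem_univ _, ?_⟩
        rcases lt_or_ge (m : ℕ) kk with hmk | hmk
        · show symp (qcast (yE i)) (qv m) = 0
          rw [hqvstd m hmk]
          exact hCA _ (hyEC i) ⟨(m : ℕ), hmk⟩
        · exact hEj i m hm.1
      calc (3 : ℕ) = (Finset.univ.erase (i : Fin 4)).card := by
            rw [Finset.card_erase_of_mem (Finset.mem_univ _)]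
            simp
        _ ≤ _ := Finset.card_le_card hsub
    · have hall : ∀ m : Fin 4, symp (qcast (yW t)) (qcast (v m)) = 0 := fun m => hyWv t m
      show (3 : ℕ) ≤ _
      rw [Finset.filter_true_of_mem (fun m _ => hall m)]
      simp
end Paper
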